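/- arXiv:1802.00875 — 4 statements merged into one kernel-verified Lean document; each statement's English description precedes it below -/
import Mathlib

section
/- Let G ∈ F^{k×n} be the generator matrix of a linear code over a finite field F. Suppose I ⊆ [k] with |I| = r and J ⊆ [n] with |J| = r are such that for all x, y ∈ F^k, x|_I can be recovered from (xG)|_J (i.e., there is a function f : F^r → F^r with f((xG)|_J) = x|_I for all x). Then the submatrix G|_{[k]∖I, J} (rows outside I, columns in J) is the zero matrix. -/
theorem stmt_0 {F : Type} [Field F] [Fintype F] {k n r : ℕ}
    (hr : 1 ≤ r) (hrk : r ≤ k) (hkn : k ≤ n)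
    (G : Matrix (Fin k) (Fin n) F)
    (I : Finset (Fin k)) (J : Finset (Fin n))
    (hI : I.card = r) (hJ : J.card = r)
    (f : (↥J → F) → (↥I → F))
    (hf : ∀ x : Fin k → F,
      f (fun j => Matrix.vecMul x G j.1) = fun i => x i.1) :
    ∀ i : Fin k, i ∉ I → ∀ j ∈ J, G i j = 0 := by
  intro i hi j hj
  have hcard : Fintype.card (↥J → F) = Fintype.card (↥I → F) := by
    simp [Fintype.card_fun, hI, hJ]
  have hsurj : Function.Surjective f := by
    intro v
    refine ⟨fun j' => Matrix.vecMul (fun i' => if h : i' ∈ I then v ⟨i', h⟩ else 0) G j'.1, ?_⟩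
    rw [hf]
    funext i'
    simp [i'.2]
  have hbij : Function.Bijective f :=
    (Fintype.bijective_iff_surjective_and_card f).2 ⟨hsurj, hcard⟩
  have key : (fun j' : ↥J => Matrix.vecMul (Pi.single i 1) G j'.1)
      = fun j' : ↥J => Matrix.vecMul (0 : Fin k → F) G j'.1 := by
    apply hbij.injective
    rw [hf, hf]
    funext i'
    have hne : i ≠ i'.1 := fun h => hi (h ▸ i'.2)
    simp [Pi.single_apply, hne]
  have h := congrFun key ⟨j, hj⟩
  simpa [Matrix.vecMul, dotProduct, Pi.single_apply] using h
end

section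
/- Let G ∈ F^{k×n} be a matrix over a finite field F, and let I ⊆ [k], J ⊆ [n] with |I| = |J| = r. If there is a function f : F^r → F^r with f((xG)|_J) = x|_I for all x ∈ F^k, then the r×r submatrix G|_{I,J} is invertible. -/
theorem stmt_1 {F : Type} [Field F] [Fintype F] {k n r : ℕ}
    (hr : 1 ≤ r) (hrk : r ≤ k) (hkn : k ≤ n)
    (G : Matrix (Fin k) (Fin n) F)
    (I : Finset (Fin k)) (J : Finset (Fin n))
    (hI : I.card = r) (hJ : J.card = r)
    (f : (↥J → F) → (↥I → F))
    (hf : ∀ x : Fin k → F,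
      f (fun j => Matrix.vecMul x G j.1) = fun i => x i.1) :
    IsUnit (Matrix.of fun (a b : Fin r) =>
      G (I.orderIsoOfFin hI a).1 (J.orderIsoOfFin hJ b).1) := by
  classical
  rw [Matrix.isUnit_iff_isUnit_det, isUnit_iff_ne_zero]
  intro hdet
  obtain ⟨v, hv, hvM⟩ := Matrix.exists_vecMul_eq_zero_iff.mpr hdet
  set e := I.orderIsoOfFin hI with he
  set e' := J.orderIsoOfFin hJ with he'
  set x : Fin k → F := fun i => if h : i ∈ I then v (e.symm ⟨i, h⟩) else 0 with hx
  have hxI : ∀ a : Fin r, x (e a) = v a := by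
    intro a
    simp [hx, (e a).2]
  have hsum : ∀ j : Fin n, Matrix.vecMul x G j
      = ∑ a : Fin r, v a * G (e a) j := by
    intro j
    rw [Matrix.vecMul, dotProduct]
    rw [← Finset.sum_subset (Finset.subset_univ I)]
    · rw [← Finset.sum_attach I fun i => x i * G i j, ← Finset.univ_eq_attach]
      exact (Fintype.sum_equiv e.toEquiv _ _ (fun a => by erw [hxI]; rfl)).symm
    · intro i _ hi
      simp [hx, hi]
  have hJ0 : ∀ j : ↥J, Matrix.vecMul x G j.1 = 0 := by
    rintro ⟨j, hj⟩
    rw [hsum]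
    have := congrFun hvM (e'.symm ⟨j, hj⟩)
    simpa [Matrix.vecMul, dotProduct] using this
  have h0 : (fun j : ↥J => Matrix.vecMul x G j.1)
      = fun j => Matrix.vecMul (0 : Fin k → F) G j.1 := by
    funext j; simp [hJ0 j]
  have hx0 := hf x
  rw [h0, hf 0] at hx0
  apply hv
  funext a
  have := congrFun hx0 ⟨e a, (e a).2⟩
  simpa [hxI] using this.symm
end

section
/- Let G ∈ F^{k×n} generate an (r,r,d)-robust batch code, and fix i ∈ [k]. Suppose the set T_i of columns of G that are nonzero scalar multiples of the standard basis vector e_i satisfies |T_i| ≤ d. Then S_i = { j : G_{i,j} ≠ 0 } satisfies |S_i| ≥ d + 1 + (k − r). -/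
/-- `G` generates an `(r,r,d)`-robust batch code. -/
def IsRBC (F : Type) [Field F] {k n : ℕ} (r d : ℕ) (G : Matrix (Fin k) (Fin n) F) : Prop :=
  ∀ I : Finset (Fin k), I.card = r → ∀ D : Finset (Fin n), D.card = d →
    ∃ J : Finset (Fin n), J.card ≤ r ∧ Disjoint J D ∧
      ∃ f : (↥J → F) → (↥I → F), ∀ x : Fin k → F,
        f (fun j => Matrix.vecMul x G j.1) = fun i => x i.1

theorem stmt_4 {F : Type} [Field F] [Fintype F] [DecidableEq F] {k n r d : ℕ}
    (hr : 1 ≤ r) (hrk : r ≤ k) (hdn : d + r ≤ n)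
    (G : Matrix (Fin k) (Fin n) F) (hG : IsRBC F r d G) (i : Fin k)
    (hT : (Finset.univ.filter (fun j : Fin n =>
        ∃ g : F, g ≠ 0 ∧ (fun i' => G i' j) = Pi.single i g)).card ≤ d) :
    d + 1 + (k - r) ≤ (Finset.univ.filter (fun j : Fin n => G i j ≠ 0)).card := by
  classical
  set S := Finset.univ.filter (fun j : Fin n => G i j ≠ 0) with hSdef
  set T := Finset.univ.filter (fun j : Fin n =>
      ∃ g : F, g ≠ 0 ∧ (fun i' => G i' j) = Pi.single i g) with hTdef
  by_contra hcon
  push_neg at hcon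
  have hScard : S.card ≤ d + (k - r) := by omega
  have hTS : T ⊆ S := by
    intro j hj
    simp only [hTdef, hSdef, Finset.mem_filter, Finset.mem_univ, true_and] at hj ⊢
    obtain ⟨g, hg, hcol⟩ := hj
    have := congrFun hcol i
    simp only [Pi.single_eq_same] at this
    rw [this]; exact hg
  -- choose E : T ⊆ E ⊆ S with card = min d S.card
  obtain ⟨E, hTE, hES, hEcard⟩ := Finset.exists_subsuperset_card_eq hTS
    (le_min hT (Finset.card_le_card hTS)) (min_le_right _ _)
  -- extend E to D of card d
  obtain ⟨D, hED, -, hDcard⟩ := Finset.exists_subsuperset_card_eq (Finset.subset_univ E)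
    (by rw [hEcard]; exact min_le_left _ _)
    (by simpa [Finset.card_univ] using by omega : d ≤ Finset.univ.card)
  have hSD : (S \ D).card ≤ k - r := by
    have h1 : S \ D ⊆ S \ E := Finset.sdiff_subset_sdiff (le_refl _) hED
    have h2 := Finset.card_le_card h1
    rw [Finset.card_sdiff_of_subset hES, hEcard] at h2
    omega
  have hTD : T ⊆ D := hTE.trans hED
  -- every column of S \ D has a nonzero entry outside i
  have hH : ∀ j ∈ S \ D, ∃ i'' : Fin k, i'' ≠ i ∧ G i'' j ≠ 0 := by
    intro j hj
    rw [Finset.mem_sdiff] at hj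
    obtain ⟨hjS, hjD⟩ := hj
    by_contra h
    push_neg at h
    apply hjD
    apply hTD
    simp only [hTdef, Finset.mem_filter, Finset.mem_univ, true_and]
    refine ⟨G i j, by simpa [hSdef] using hjS, ?_⟩
    funext i''
    by_cases hii : i'' = i
    · subst hii; simp
    · rw [Pi.single_eq_of_ne hii]
      exact h i'' hii
  -- the bad rows
  let ψ : Fin n → Fin k := fun j =>
    if h : ∃ i'' : Fin k, i'' ≠ i ∧ G i'' j ≠ 0 then h.choose else i
  have hψ : ∀ j ∈ S \ D, ψ j ≠ i ∧ G (ψ j) j ≠ 0 := by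
    intro j hj
    have h := hH j hj
    simp only [ψ, dif_pos h]
    exact h.choose_spec
  set B := (S \ D).image ψ with hBdef
  have hBcard : B.card ≤ k - r := le_trans (Finset.card_image_le) hSD
  have hiB : i ∉ B := by
    simp only [hBdef, Finset.mem_image]
    rintro ⟨j, hj, hji⟩
    exact (hψ j hj).1 hji
  -- choose I
  obtain ⟨I, hiI, hIB, hIcard⟩ := Finset.exists_subsuperset_card_eq
    (show {i} ⊆ Finset.univ \ B by simp [hiB])
    (by simpa using hr)
    (by rw [Finset.card_sdiff_of_subset (Finset.subset_univ B), Finset.card_univ, Fintype.card_fin]; omega)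
  have hiI' : i ∈ I := hiI (Finset.mem_singleton_self i)
  obtain ⟨J, hJcard, hJD, f, hf⟩ := hG I hIcard D hDcard
  -- determinacy gives: kernel on J forces zero on I
  have hker : ∀ x : Fin k → F, (∀ j : ↥J, Matrix.vecMul x G j.1 = 0) → ∀ i' : ↥I, x i'.1 = 0 := by
    intro x hx i'
    have h1 := congrFun (hf x) i'
    have h2 := congrFun (hf 0) i'
    have heq : (fun j : ↥J => Matrix.vecMul x G j.1)
        = (fun j : ↥J => Matrix.vecMul (0 : Fin k → F) G j.1) := by
      funext j
      rw [hx j, Matrix.zero_vecMul]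
      rfl
    rw [heq, h2] at h1
    exact h1.symm
  -- linear maps
  let L : (Fin k → F) →ₗ[F] (↥J → F) :=
    (LinearMap.funLeft F F (fun j : ↥J => (j.1 : Fin n))).comp G.vecMulLinear
  let P : (Fin k → F) →ₗ[F] (↥I → F) :=
    LinearMap.funLeft F F (fun i' : ↥I => (i'.1 : Fin k))
  have hle : LinearMap.ker L ≤ LinearMap.ker P := by
    intro x hx
    rw [LinearMap.mem_ker] at hx ⊢
    have hx' : ∀ j : ↥J, Matrix.vecMul x G j.1 = 0 := fun j => congrFun hx j
    funext i'
    exact hker x hx' i'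
  have hPsurj : Function.Surjective P :=
    LinearMap.funLeft_surjective_of_injective F F _ Subtype.val_injective
  have e1 : Module.finrank F (LinearMap.range P) + Module.finrank F (LinearMap.ker P) = k := by
    rw [LinearMap.finrank_range_add_finrank_ker, Module.finrank_pi, Fintype.card_fin]
  have e2 : Module.finrank F (LinearMap.range L) + Module.finrank F (LinearMap.ker L) = k := by
    rw [LinearMap.finrank_range_add_finrank_ker, Module.finrank_pi, Fintype.card_fin]
  have e3 : Module.finrank F (LinearMap.range P) = r := by
    rw [LinearMap.range_eq_top.mpr hPsurj, finrank_top, Module.finrank_pi,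
      Fintype.card_coe, hIcard]
  have e4 : Module.finrank F (LinearMap.range L) ≤ r := by
    refine le_trans (Submodule.finrank_le _) ?_
    rw [Module.finrank_pi, Fintype.card_coe]
    exact hJcard
  have heqker : LinearMap.ker L = LinearMap.ker P :=
    Submodule.eq_of_le_of_finrank_le hle (by omega)
  -- columns of J vanish outside I
  have hzero : ∀ i'' : Fin k, i'' ∉ I → ∀ j ∈ J, G i'' j = 0 := by
    intro i'' hi'' j hj
    have hx : Pi.single i'' (1 : F) ∈ LinearMap.ker P := by
      rw [LinearMap.mem_ker]
      funext i'
      simp only [P, LinearMap.funLeft_apply, Function.comp_apply, Pi.zero_apply]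
      exact Pi.single_eq_of_ne (fun h : i'.1 = i'' => hi'' (h ▸ i'.2)) 1
    rw [← heqker, LinearMap.mem_ker] at hx
    have h0 := congrFun hx (⟨j, hj⟩ : ↥J)
    have : Matrix.vecMul (Pi.single i'' (1 : F)) G j = 0 := h0
    rw [Matrix.single_vecMul] at this
    simpa using this
  -- some column of J has nonzero i-th row entry
  have hone : ∃ j ∈ J, G i j ≠ 0 := by
    by_contra h
    push_neg at h
    have hz : ∀ j : ↥J, Matrix.vecMul (Pi.single i (1 : F)) G j.1 = 0 := by
      intro j
      rw [Matrix.single_vecMul]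
      simp [h j.1 j.2]
    have := hker (Pi.single i 1) hz ⟨i, hiI'⟩
    simp at this
  obtain ⟨j, hjJ, hjG⟩ := hone
  have hjS : j ∈ S := by simp [hSdef, hjG]
  have hjD : j ∉ D := fun hD => (Finset.disjoint_left.mp hJD hjJ) hD
  have hjSD : j ∈ S \ D := Finset.mem_sdiff.mpr ⟨hjS, hjD⟩
  have hψj := hψ j hjSD
  have hψI : ψ j ∉ I := by
    intro hmem
    have := hIB hmem
    rw [Finset.mem_sdiff] at this
    exact this.2 (Finset.mem_image_of_mem ψ hjSD)
  exact hψj.2 (hzero (ψ j) hψI j hjJ)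
end

section
/- For real numbers k ≥ r ≥ 1 and d ≥ 0, if r ≤ k + d − √((k+d)² − k²), then d(r − 1) ≤ (k − r)²/2. -/
theorem stmt_10 (k r d : ℝ) (hr : 1 ≤ r) (hrk : r ≤ k) (hd : 0 ≤ d)
    (hcond : r ≤ k + d - Real.sqrt ((k + d) ^ 2 - k ^ 2)) :
    d * (r - 1) ≤ (k - r) ^ 2 / 2 := by
  have hnn : (0:ℝ) ≤ (k + d) ^ 2 - k ^ 2 := by nlinarith
  have hs := Real.sq_sqrt hnn
  have hs0 := Real.sqrt_nonneg ((k + d) ^ 2 - k ^ 2)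
  nlinarith [sq_nonneg (Real.sqrt ((k + d) ^ 2 - k ^ 2) - (k + d - r))]
end
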